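/- arXiv:1512.02662 — 3 statements merged into one kernel-verified Lean document; each statement's English description precedes it below -/
import Mathlib

section
/- Let R be a commutative ring, J an ideal of R[t, x_1, ..., x_n] generated by terms, and > a t-local monomial ordering on the monomials in t and x. If f, u ∈ R[t,x] satisfy u·f ∈ J and the leading term of u with respect to > equals 1, then f ∈ J. -/
open MvPolynomial

/-- A `t`-local monomial ordering on the monomials of `R[t,x₁,…,xₙ]`
(exponent vectors in `Fin (n+1) →₀ ℕ`, variable `0` playing the role of `t`):
`r a b` means `a < b`.  It is a strict total order compatible with the
semigroup structure, and `t`-local means `t < 1` (i.e. `1 > t`, so that the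
leading monomial — the largest monomial occurring — of `1 - t` is `1`). -/
def IsTLocalMonomialOrder {n : ℕ} (r : (Fin (n + 1) →₀ ℕ) → (Fin (n + 1) →₀ ℕ) → Prop) : Prop :=
  (∀ a b, a ≠ b → r a b ∨ r b a) ∧ (∀ a, ¬ r a a) ∧
  (∀ a b c, r a b → r b c → r a c) ∧
  (∀ a b c, r a b → r (a + c) (b + c)) ∧
  r (Finsupp.single 0 1) 0

/-- Let `J ⊆ R[t,x]` be an ideal generated by terms and `>` a
`t`-local monomial ordering.  If `u·f ∈ J` and `lt_>(u) = 1` (i.e. the monomial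
`1` occurs in `u` with coefficient `1` and every other monomial of `u` is
smaller), then `f ∈ J`. -/
theorem mem_of_unit_mul_mem_span_terms {R : Type*} [CommRing R] {n : ℕ}
    (r : (Fin (n + 1) →₀ ℕ) → (Fin (n + 1) →₀ ℕ) → Prop)
    (hr : IsTLocalMonomialOrder r)
    (S : Set (MvPolynomial (Fin (n + 1)) R))
    (hS : ∀ s ∈ S, ∃ (d : Fin (n + 1) →₀ ℕ) (c : R), s = monomial d c)
    (J : Ideal (MvPolynomial (Fin (n + 1)) R)) (hJ : J = Ideal.span S)
    (u f : MvPolynomial (Fin (n + 1)) R)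
    (hu1 : u.coeff 0 = 1)
    (hu2 : ∀ d ∈ u.support, d ≠ 0 → r d 0)
    (huf : u * f ∈ J) :
    f ∈ J := by

  classical
  obtain ⟨htot, hirr, htrans, hadd, hloc⟩ := hr
  -- J is a monomial ideal: membership is coefficient-wise
  have hK : ∀ g ∈ J, ∀ d, (monomial d (g.coeff d) : MvPolynomial (Fin (n + 1)) R) ∈ J := by
    let K : Ideal (MvPolynomial (Fin (n + 1)) R) :=
      { carrier := {g | ∀ d, (monomial d (g.coeff d) : MvPolynomial (Fin (n + 1)) R) ∈ J}
        add_mem' := by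
          intro a b ha hb d
          rw [coeff_add, map_add]
          exact J.add_mem (ha d) (hb d)
        zero_mem' := by intro d; simp
        smul_mem' := by
          intro c x hx d
          rw [smul_eq_mul, coeff_mul, map_sum]
          refine Ideal.sum_mem _ fun p hp => ?_
          rw [← Finset.HasAntidiagonal.mem_antidiagonal.mp hp, ← monomial_mul]
          exact J.mul_mem_left _ (hx p.2) }
    have hle : J ≤ K := by
      rw [hJ]
      refine Ideal.span_le.mpr fun s hs => ?_
      obtain ⟨e, c, rfl⟩ := hS s hs
      intro d
      by_cases hde : e = d
      · subst hde
        simpa [coeff_monomial] using (hJ ▸ Ideal.subset_span hs :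
          (monomial e c : MvPolynomial (Fin (n + 1)) R) ∈ J)
      · simp [coeff_monomial, hde]
    exact fun g hg => hle hg
  have key : ∀ m : ℕ, ∀ d ∈ f.support,
      (f.support.filter (fun b => r d b)).card < m →
      (monomial d (f.coeff d) : MvPolynomial (Fin (n + 1)) R) ∈ J := by
    intro m
    induction m with
    | zero => exact fun d _ h => absurd h (Nat.not_lt_zero _)
    | succ m ih =>
      intro d hd hcard
      have h0 : ((0 : Fin (n + 1) →₀ ℕ), d) ∈ Finset.HasAntidiagonal.antidiagonal d :=
        Finset.HasAntidiagonal.mem_antidiagonal.mpr (zero_add d)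
      have hsum : f.coeff d = (u * f).coeff d -
          ∑ p ∈ (Finset.HasAntidiagonal.antidiagonal d).erase (0, d), u.coeff p.1 * f.coeff p.2 := by
        rw [coeff_mul, ← Finset.add_sum_erase _ _ h0]
        simp [hu1]
      rw [hsum, map_sub, map_sum]
      refine J.sub_mem (hK _ huf d) (Ideal.sum_mem _ fun p hp => ?_)
      by_cases hu0 : u.coeff p.1 = 0
      · simp [hu0]
      by_cases hf0 : f.coeff p.2 = 0
      · simp [hf0]
      have hpd : p.1 + p.2 = d := Finset.HasAntidiagonal.mem_antidiagonal.mp (Finset.mem_of_mem_erase hp)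
      have hp1 : p.1 ≠ 0 := by
        intro h1
        refine Finset.ne_of_mem_erase hp ?_
        have h2 : p.2 = d := by rw [← hpd, h1, zero_add]
        exact Prod.ext h1 h2
      have hrd : r d p.2 := by
        have := hadd p.1 0 p.2 (hu2 p.1 (mem_support_iff.mpr hu0) hp1)
        rwa [hpd, zero_add] at this
      have hmem2 : p.2 ∈ f.support := mem_support_iff.mpr hf0
      have hsub : (f.support.filter (fun b => r p.2 b)) ⊆ (f.support.filter (fun b => r d b)) := by
        intro c hc
        simp only [Finset.mem_filter] at hc ⊢
        exact ⟨hc.1, htrans _ _ _ hrd hc.2⟩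
      have hss : (f.support.filter (fun b => r p.2 b)) ⊂ (f.support.filter (fun b => r d b)) :=
        (Finset.ssubset_iff_of_subset hsub).mpr
          ⟨p.2, Finset.mem_filter.mpr ⟨hmem2, hrd⟩,
            fun h => hirr p.2 (Finset.mem_filter.mp h).2⟩
      have hlt : (f.support.filter (fun b => r p.2 b)).card < m := by
        have := Finset.card_lt_card hss
        omega
      rw [← hpd, ← monomial_mul]
      exact J.mul_mem_left _ (ih p.2 hmem2 hlt)
  rw [← support_sum_monomial_coeff f]
  exact Ideal.sum_mem _ fun d hd =>
    key ((f.support.filter (fun b => r d b)).card + 1) d hd (Nat.lt_succ_self _)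
end

section
/- Let R be a commutative ring and g a nonzero element of R⟦t⟧[x_1,...,x_n]. Then as w ranges over ℝ_{<0} × ℝ^n, the element g has only finitely many distinct initial forms in_w(g). -/
open MvPolynomial

noncomputable section

variable {R : Type*} [CommRing R] {n : ℕ}

/-- The mixed power-series–polynomial ring `R⟦t⟧[x₁,…,xₙ]`. -/
abbrev MixedRing (R : Type*) [CommRing R] (n : ℕ) :=
  MvPolynomial (Fin n) (PowerSeries R)

/-- The polynomial ring `R[t][x₁,…,xₙ] = R[t,x]`. -/
abbrev PolyRing (R : Type*) [CommRing R] (n : ℕ) :=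
  MvPolynomial (Fin n) (Polynomial R)

/-- A monomial `t^β x^α` is encoded as the pair `(α, β)`. -/
abbrev Mon (n : ℕ) := (Fin n →₀ ℕ) × ℕ

/-- The coefficient of `f ∈ R⟦t⟧[x]` at the monomial `t^β x^α`. -/
def coeffAt (f : MixedRing R n) (m : Mon n) : R :=
  PowerSeries.coeff (R := R) m.2 (MvPolynomial.coeff m.1 f)

/-- The coefficient of `q ∈ R[t,x]` at the monomial `t^β x^α`. -/
def coeffAtP (q : PolyRing R n) (m : Mon n) : R :=
  (MvPolynomial.coeff m.1 q).coeff m.2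

/-- The `w`-weighted degree of the monomial `t^β x^α`, where `w = (w₀, w₁,…,wₙ)`. -/
def wdeg (w0 : ℝ) (w : Fin n → ℝ) (m : Mon n) : ℝ :=
  w0 * m.2 + ∑ i, w i * (m.1 i : ℝ)

/-- The maximal `w`-weighted degree of a term of `f ∈ R⟦t⟧[x]`
(as a supremum; it is attained when `w₀ < 0` and `f ≠ 0`). -/
def maxdeg (w0 : ℝ) (w : Fin n → ℝ) (f : MixedRing R n) : ℝ :=
  sSup (wdeg w0 w '' {m | coeffAt f m ≠ 0})

/-- The least power of `t` occurring in a power series `s` (junk value `0` for `s = 0`). -/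
def tord (s : PowerSeries R) : ℕ :=
  sInf {k | PowerSeries.coeff (R := R) k s ≠ 0}

open Classical in
/-- The initial form `in_w(f)` of `f ∈ R⟦t⟧[x]` with respect to the weight
vector `w = (w₀, w) ∈ ℝ_{<0} × ℝⁿ`: the sum of the terms of `f` of maximal
`w`-weighted degree.  Since `w₀ < 0`, for each `x`-monomial `x^α` only the term
of least `t`-order can contribute, so the initial form is a polynomial in
`R[t,x]`. -/
def initialForm (w0 : ℝ) (w : Fin n → ℝ) (f : MixedRing R n) : PolyRing R n :=
  ∑ α ∈ f.support,
    if wdeg w0 w (α, tord (MvPolynomial.coeff α f)) = maxdeg w0 w f then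
      MvPolynomial.monomial α
        (Polynomial.monomial (tord (MvPolynomial.coeff α f))
          (PowerSeries.coeff (R := R) (tord (MvPolynomial.coeff α f)) (MvPolynomial.coeff α f)))
    else 0

/-- `r` is a `t`-local monomial ordering on `Mon(t,x)`: a strict total order
(`r a b` meaning `a < b`) compatible with the semigroup structure and with
`t < 1` (so that leading monomials — the largest monomials occurring — of unit
power series are `1`). -/
def IsTLocalOrder (r : Mon n → Mon n → Prop) : Prop :=
  (∀ a b, a ≠ b → r a b ∨ r b a) ∧ (∀ a, ¬ r a a) ∧
  (∀ a b c, r a b → r b c → r a c) ∧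
  (∀ a b c, r a b → r (a + c) (b + c)) ∧
  r ((0 : Fin n →₀ ℕ), 1) ((0 : Fin n →₀ ℕ), 0)

/-- `f ∈ R⟦t⟧[x]` has leading term `c · t^β x^α` (with `m = (α,β)`) with respect
to the ordering `r`: the coefficient of `f` at `m` is `c ≠ 0` and every other
monomial occurring in `f` is `r`-smaller than `m`. -/
def IsLeadingTerm (r : Mon n → Mon n → Prop) (f : MixedRing R n) (m : Mon n) (c : R) : Prop :=
  coeffAt f m = c ∧ c ≠ 0 ∧ ∀ m', coeffAt f m' ≠ 0 → m' = m ∨ r m' m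

/-- Leading-term predicate for elements of `R[t,x]`. -/
def IsLeadingTermP (r : Mon n → Mon n → Prop) (q : PolyRing R n) (m : Mon n) (c : R) : Prop :=
  coeffAtP q m = c ∧ c ≠ 0 ∧ ∀ m', coeffAtP q m' ≠ 0 → m' = m ∨ r m' m

/-- The term `c · t^β x^α` as an element of `R[t,x]`. -/
def termA (m : Mon n) (c : R) : PolyRing R n :=
  MvPolynomial.monomial m.1 (Polynomial.monomial m.2 c)

/-- The leading ideal `lt_>(I) ⊆ R[t,x]` of an ideal `I ⊆ R⟦t⟧[x]`. -/
def ltIdeal (r : Mon n → Mon n → Prop) (I : Ideal (MixedRing R n)) : Ideal (PolyRing R n) :=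
  Ideal.span {q | ∃ f ∈ I, ∃ m c, IsLeadingTerm r f m c ∧ q = termA m c}

/-- The ideal of `R[t,x]` generated by the leading terms of a finite set `G ⊆ R⟦t⟧[x]`. -/
def ltSpan (r : Mon n → Mon n → Prop) (G : Finset (MixedRing R n)) : Ideal (PolyRing R n) :=
  Ideal.span {q | ∃ f ∈ G, ∃ m c, IsLeadingTerm r f m c ∧ q = termA m c}

/-- The leading ideal of an ideal `J ⊆ R[t,x]`. -/
def ltIdealP (r : Mon n → Mon n → Prop) (J : Ideal (PolyRing R n)) : Ideal (PolyRing R n) :=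
  Ideal.span {q | ∃ f ∈ J, ∃ m c, IsLeadingTermP r f m c ∧ q = termA m c}

/-- The initial ideal `in_w(I) ⊆ R[t,x]` of an ideal `I ⊆ R⟦t⟧[x]`. -/
def initialIdeal (w0 : ℝ) (w : Fin n → ℝ) (I : Ideal (MixedRing R n)) : Ideal (PolyRing R n) :=
  Ideal.span {q | ∃ f ∈ I, q = initialForm w0 w f}

/-- `f ∈ R⟦t⟧[x]` is `x`-homogeneous: all monomials occurring in `f` have the
same total degree in the variables `x₁,…,xₙ`. -/
def IsXHomogeneous (f : MixedRing R n) : Prop :=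
  ∃ d, ∀ α ∈ f.support, (α.sum fun _ e => e) = d

/-- An ideal `I ⊆ R⟦t⟧[x]` is `x`-homogeneous if it is generated by
`x`-homogeneous elements. -/
def Ideal.IsXHomogeneousIdeal (I : Ideal (MixedRing R n)) : Prop :=
  ∃ S : Set (MixedRing R n), (∀ f ∈ S, IsXHomogeneous f) ∧ I = Ideal.span S

/-- The `t`-initial truncation `Σ_α lt_>(g_α)·x^α` of `g = Σ_α g_α·x^α ∈ R⟦t⟧[x]`,
keeping for each `x`-monomial only the term of least `t`-power. -/
def tTrunc (g : MixedRing R n) : MixedRing R n :=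
  ∑ α ∈ g.support,
    MvPolynomial.monomial α
      ((PowerSeries.monomial (R := R) (tord (MvPolynomial.coeff α g)))
        (PowerSeries.coeff (R := R) (tord (MvPolynomial.coeff α g)) (MvPolynomial.coeff α g)))

/-- `G` is a standard basis of the ideal `I ⊆ R⟦t⟧[x]` with respect to `r`:
`G ⊆ I` and the leading terms of the elements of `G` generate the leading
ideal of `I`. -/
def IsStandardBasis (r : Mon n → Mon n → Prop) (I : Ideal (MixedRing R n))
    (G : Finset (MixedRing R n)) : Prop :=
  ↑G ⊆ (I : Set (MixedRing R n)) ∧ ltSpan r G = ltIdeal r I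

open Classical in
/-- `G` is an initially reduced standard basis of `I` w.r.t. `r`: a standard
basis that is minimal and such that no term of the `t`-initial truncation of
any `g ∈ G`, other than the leading term of `g`, lies in the leading ideal. -/
def IsInitiallyReducedSB (r : Mon n → Mon n → Prop) (I : Ideal (MixedRing R n))
    (G : Finset (MixedRing R n)) : Prop :=
  IsStandardBasis r I G ∧
  (∀ g ∈ G, ltSpan r (G.erase g) ≠ ltSpan r G) ∧
  (∀ g ∈ G, ∀ m, coeffAt (tTrunc g) m ≠ 0 → ¬ (∃ c, IsLeadingTerm r g m c) →
    termA m (coeffAt (tTrunc g) m) ∉ ltIdeal r I)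

/-- The (interior part of the) Gröbner cone `C_>(I)`: the Euclidean closure of
the set of weight vectors `v ∈ ℝ_{<0} × ℝⁿ` with `in_v(I) = lt_>(I)`. -/
def groebnerCone (r : Mon n → Mon n → Prop) (I : Ideal (MixedRing R n)) :
    Set (ℝ × (Fin n → ℝ)) :=
  closure {v : ℝ × (Fin n → ℝ) | v.1 < 0 ∧ initialIdeal v.1 v.2 I = ltIdeal r I}


/-- A nonzero element `g ∈ R⟦t⟧[x₁,…,xₙ]` has only finitely
many distinct initial forms `in_w(g)` as `w` ranges over `ℝ_{<0} × ℝⁿ`. -/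
theorem finite_initialForms (g : MixedRing R n) (hg : g ≠ 0) :
    {q : PolyRing R n | ∃ w0 : ℝ, w0 < 0 ∧ ∃ w : Fin n → ℝ, initialForm w0 w g = q}.Finite := by
  classical
  set F : Finset (Fin n →₀ ℕ) → PolyRing R n := fun s =>
    ∑ α ∈ s,
      MvPolynomial.monomial α
        (Polynomial.monomial (tord (MvPolynomial.coeff α g))
          (PowerSeries.coeff (R := R) (tord (MvPolynomial.coeff α g)) (MvPolynomial.coeff α g)))
    with hF
  apply Set.Finite.subset ((g.support.powerset.image F : Finset (PolyRing R n)).finite_toSet)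
  rintro q ⟨w0, hw0, w, rfl⟩
  simp only [Finset.coe_image, Set.mem_image, Finset.mem_coe, Finset.mem_powerset]
  refine ⟨g.support.filter
      (fun α => wdeg w0 w (α, tord (MvPolynomial.coeff α g)) = maxdeg w0 w g),
    ⟨Finset.filter_subset _ _, ?_⟩⟩
  rw [hF]
  simp only [Finset.sum_filter]
  rw [initialForm]

end
end

section
/- Let R be a commutative ring, g ∈ R⟦t⟧[x_1,...,x_n], w ∈ ℝ_{<0}×ℝ^n, and v ∈ ℝ^{n+1}. Then there exists ε_0 > 0 such that for all 0 < ε < ε_0, in_{w+εv}(g) = in_v(in_w(g)). -/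
open MvPolynomial

noncomputable section

variable {R : Type*} [CommRing R] {n : ℕ}

/-- The maximal `v`-weighted degree of a term of a polynomial `q ∈ R[t,x]`. -/
def maxdegP (v0 : ℝ) (v : Fin n → ℝ) (q : PolyRing R n) : ℝ :=
  sSup (wdeg v0 v '' {m | coeffAtP q m ≠ 0})

open Classical in
/-- The initial form of a polynomial `q ∈ R[t,x]` with respect to an arbitrary
weight vector `v ∈ ℝ^{n+1}` (well defined since `q` has finitely many terms):
the sum of the terms of `q` of maximal `v`-weighted degree. -/
def initialFormP (v0 : ℝ) (v : Fin n → ℝ) (q : PolyRing R n) : PolyRing R n :=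
  ∑ α ∈ q.support,
    MvPolynomial.monomial α
      (∑ β ∈ (MvPolynomial.coeff α q).support,
        if wdeg v0 v (α, β) = maxdegP v0 v q then
          Polynomial.monomial β ((MvPolynomial.coeff α q).coeff β)
        else 0)

/-! ### Auxiliary lemmas for Statement 7 -/

lemma aux_coeff_tord_ne_zero {s : PowerSeries R} (hs : s ≠ 0) :
    PowerSeries.coeff (R := R) (tord s) s ≠ 0 := by
  have hne : {k | PowerSeries.coeff (R := R) k s ≠ 0}.Nonempty := by
    by_contra h
    rw [Set.not_nonempty_iff_eq_empty] at h
    apply hs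
    ext k
    by_contra hk
    have : k ∈ {k | PowerSeries.coeff (R := R) k s ≠ 0} := by
      simp only [Set.mem_setOf_eq]
      simpa using hk
    simp [h] at this
  exact Nat.sInf_mem hne

/-- The `u`-weighted degree of the monomial `t^(tord g_α) x^α`. -/
def wOf (u0 : ℝ) (u : Fin n → ℝ) (g : MixedRing R n) (α : Fin n →₀ ℕ) : ℝ :=
  wdeg u0 u (α, tord (MvPolynomial.coeff α g))

lemma aux_wdeg_add (w0 v0 ε : ℝ) (w v : Fin n → ℝ) (m : Mon n) :
    wdeg (w0 + ε * v0) (w + ε • v) m = wdeg w0 w m + ε * wdeg v0 v m := by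
  simp only [wdeg, Pi.add_apply, Pi.smul_apply, smul_eq_mul]
  have h1 : ∑ i, (w i + ε * v i) * (m.1 i : ℝ)
      = ∑ i, (w i * (m.1 i : ℝ) + ε * (v i * (m.1 i : ℝ))) :=
    Finset.sum_congr rfl fun i _ => by ring
  rw [h1, Finset.sum_add_distrib, ← Finset.mul_sum]
  ring

lemma aux_wOf_add (w0 v0 ε : ℝ) (w v : Fin n → ℝ) (g : MixedRing R n) (α : Fin n →₀ ℕ) :
    wOf (w0 + ε * v0) (w + ε • v) g α = wOf w0 w g α + ε * wOf v0 v g α :=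
  aux_wdeg_add w0 v0 ε w v _

lemma aux_maxdeg_eq_sup' {g : MixedRing R n} (hs : g.support.Nonempty) {u0 : ℝ}
    (hu0 : u0 < 0) (u : Fin n → ℝ) :
    maxdeg u0 u g = g.support.sup' hs (wOf u0 u g) := by
  apply IsGreatest.csSup_eq
  constructor
  · obtain ⟨α₀, hα₀, heq⟩ := Finset.exists_mem_eq_sup' hs (wOf u0 u g)
    rw [heq]
    exact ⟨(α₀, tord (MvPolynomial.coeff α₀ g)),
      aux_coeff_tord_ne_zero (MvPolynomial.mem_support_iff.mp hα₀), rfl⟩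
  · rintro x ⟨⟨α, β⟩, hm, rfl⟩
    have hm' : PowerSeries.coeff (R := R) β (MvPolynomial.coeff α g) ≠ 0 := hm
    have hα : α ∈ g.support := MvPolynomial.mem_support_iff.mpr (fun h => hm' (by simp [h]))
    have hβ : tord (MvPolynomial.coeff α g) ≤ β := Nat.sInf_le hm'
    have h1 : wdeg u0 u (α, β) ≤ wOf u0 u g α := by
      simp only [wOf, wdeg]
      have h2 : u0 * (β : ℝ) ≤ u0 * ((tord (MvPolynomial.coeff α g) : ℕ) : ℝ) :=
        mul_le_mul_of_nonpos_left (by exact_mod_cast hβ) hu0.le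
      linarith
    exact h1.trans (Finset.le_sup' _ hα)

open Classical in
lemma aux_coeff_initialForm (w0 : ℝ) (w : Fin n → ℝ) (g : MixedRing R n) (α : Fin n →₀ ℕ) :
    MvPolynomial.coeff α (initialForm w0 w g) =
      if α ∈ g.support ∧ wOf w0 w g α = maxdeg w0 w g then
        Polynomial.monomial (tord (MvPolynomial.coeff α g))
          (PowerSeries.coeff (R := R) (tord (MvPolynomial.coeff α g)) (MvPolynomial.coeff α g))
      else 0 := by
  classical
  rw [initialForm, MvPolynomial.coeff_sum]
  simp only [apply_ite (MvPolynomial.coeff α), MvPolynomial.coeff_monomial,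
    MvPolynomial.coeff_zero]
  have hswap : ∀ α' ∈ g.support,
      (if wdeg w0 w (α', tord (MvPolynomial.coeff α' g)) = maxdeg w0 w g then
        (if α' = α then
          Polynomial.monomial (tord (MvPolynomial.coeff α' g))
            (PowerSeries.coeff (R := R) (tord (MvPolynomial.coeff α' g)) (MvPolynomial.coeff α' g))
          else 0)
        else 0)
      = (if α' = α then
          (if wdeg w0 w (α', tord (MvPolynomial.coeff α' g)) = maxdeg w0 w g then
            Polynomial.monomial (tord (MvPolynomial.coeff α' g))
              (PowerSeries.coeff (R := R) (tord (MvPolynomial.coeff α' g)) (MvPolynomial.coeff α' g))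
            else 0)
          else 0) := by
    intro α' _
    by_cases h1 : wdeg w0 w (α', tord (MvPolynomial.coeff α' g)) = maxdeg w0 w g <;>
      by_cases h2 : α' = α <;> simp [h1, h2]
  rw [Finset.sum_congr rfl hswap, Finset.sum_ite_eq' g.support α]
  simp only [wOf]
  by_cases h1 : α ∈ g.support <;>
    by_cases h2 : wdeg w0 w (α, tord (MvPolynomial.coeff α g)) = maxdeg w0 w g <;>
    simp [h1, h2]

open Classical in
lemma aux_support_initialForm (w0 : ℝ) (w : Fin n → ℝ) (g : MixedRing R n) :
    (initialForm w0 w g).support =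
      g.support.filter (fun α => wOf w0 w g α = maxdeg w0 w g) := by
  classical
  ext α
  rw [MvPolynomial.mem_support_iff, Finset.mem_filter, aux_coeff_initialForm]
  by_cases h : α ∈ g.support ∧ wOf w0 w g α = maxdeg w0 w g
  · rw [if_pos h]
    have hc : PowerSeries.coeff (R := R) (tord (MvPolynomial.coeff α g)) (MvPolynomial.coeff α g) ≠ 0 :=
      aux_coeff_tord_ne_zero (MvPolynomial.mem_support_iff.mp h.1)
    exact iff_of_true (fun h0 => hc ((Polynomial.monomial_eq_zero_iff _ _).mp h0)) h
  · rw [if_neg h]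
    exact iff_of_false (fun h0 => h0 rfl) h

open Classical in
lemma aux_maxdegP_initialForm (v0 : ℝ) (v : Fin n → ℝ) {w0 : ℝ} {w : Fin n → ℝ}
    {g : MixedRing R n} (hq : (initialForm w0 w g).support.Nonempty) :
    maxdegP v0 v (initialForm w0 w g) =
      (initialForm w0 w g).support.sup' hq (wOf v0 v g) := by
  classical
  apply IsGreatest.csSup_eq
  constructor
  · obtain ⟨α₀, hα₀, heq⟩ := Finset.exists_mem_eq_sup' hq (wOf v0 v g)
    rw [heq]
    refine ⟨(α₀, tord (MvPolynomial.coeff α₀ g)), ?_, rfl⟩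
    have hα₀' : α₀ ∈ g.support ∧ wOf w0 w g α₀ = maxdeg w0 w g := by
      have := hα₀
      rw [aux_support_initialForm, Finset.mem_filter] at this
      exact this
    show coeffAtP (initialForm w0 w g) (α₀, tord (MvPolynomial.coeff α₀ g)) ≠ 0
    rw [coeffAtP, aux_coeff_initialForm, if_pos hα₀']
    simp only [Polynomial.coeff_monomial, if_pos rfl]
    exact aux_coeff_tord_ne_zero (MvPolynomial.mem_support_iff.mp hα₀'.1)
  · rintro x ⟨⟨α, β⟩, hm, rfl⟩
    have hm' : (MvPolynomial.coeff α (initialForm w0 w g)).coeff β ≠ 0 := hm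
    rw [aux_coeff_initialForm] at hm'
    by_cases h : α ∈ g.support ∧ wOf w0 w g α = maxdeg w0 w g
    · rw [if_pos h] at hm'
      have hβ : β = tord (MvPolynomial.coeff α g) := by
        by_contra hne
        apply hm'
        rw [Polynomial.coeff_monomial, if_neg (fun hh => hne hh.symm)]
      have hαq : α ∈ (initialForm w0 w g).support := by
        rw [aux_support_initialForm, Finset.mem_filter]; exact h
      have : wdeg v0 v (α, β) = wOf v0 v g α := by rw [hβ]; rfl
      rw [this]
      exact Finset.le_sup' _ hαq
    · rw [if_neg h] at hm'
      simp at hm'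

open Classical in
lemma aux_coeff_initialFormP (v0 : ℝ) (v : Fin n → ℝ) (q : PolyRing R n) (α : Fin n →₀ ℕ) :
    MvPolynomial.coeff α (initialFormP v0 v q) =
      if α ∈ q.support then
        (∑ β ∈ (MvPolynomial.coeff α q).support,
          if wdeg v0 v (α, β) = maxdegP v0 v q then
            Polynomial.monomial β ((MvPolynomial.coeff α q).coeff β)
          else 0)
      else 0 := by
  classical
  rw [initialFormP, MvPolynomial.coeff_sum]
  simp only [MvPolynomial.coeff_monomial]
  rw [Finset.sum_ite_eq' q.support α]

/-- For `g ∈ R⟦t⟧[x]`, `w ∈ ℝ_{<0} × ℝⁿ` and `v ∈ ℝ^{n+1}`,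
there is `ε₀ > 0` such that for all `0 < ε < ε₀` the vector `w + εv` still lies
in `ℝ_{<0} × ℝⁿ` and `in_{w+εv}(g) = in_v(in_w(g))`. -/
theorem initialForm_perturbation (g : MixedRing R n)
    (w0 : ℝ) (hw0 : w0 < 0) (w : Fin n → ℝ) (v0 : ℝ) (v : Fin n → ℝ) :
    ∃ ε0 : ℝ, 0 < ε0 ∧ ∀ ε : ℝ, 0 < ε → ε < ε0 →
      w0 + ε * v0 < 0 ∧
      initialForm (w0 + ε * v0) (w + ε • v) g =
        initialFormP v0 v (initialForm w0 w g) := by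
  classical
  obtain ⟨ε₁, hε₁pos, hε₁⟩ : ∃ ε₁ : ℝ, 0 < ε₁ ∧ ∀ ε : ℝ, 0 < ε → ε < ε₁ → w0 + ε * v0 < 0 := by
    by_cases hv : v0 ≤ 0
    · exact ⟨1, one_pos, fun ε hε _ => by nlinarith⟩
    · push_neg at hv
      refine ⟨-w0 / v0, div_pos (by linarith) hv, fun ε hε hlt => ?_⟩
      have := (lt_div_iff₀ hv).mp hlt
      linarith
  by_cases hg : g = 0
  · subst hg
    refine ⟨ε₁, hε₁pos, fun ε hε hlt => ⟨hε₁ ε hε hlt, ?_⟩⟩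
    simp [initialForm, initialFormP]
  -- main case
  have hs : g.support.Nonempty := MvPolynomial.support_nonempty.mpr hg
  set Mw : ℝ := g.support.sup' hs (wOf w0 w g) with hMwdef
  have hmaxw : maxdeg w0 w g = Mw := by rw [hMwdef]; exact aux_maxdeg_eq_sup' hs hw0 w
  have hsuppq : (initialForm w0 w g).support =
      g.support.filter (fun α => wOf w0 w g α = maxdeg w0 w g) :=
    aux_support_initialForm w0 w g
  obtain ⟨α₀, hα₀s, hα₀⟩ := Finset.exists_mem_eq_sup' hs (wOf w0 w g)
  have hα₀S : α₀ ∈ (initialForm w0 w g).support := by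
    rw [hsuppq, Finset.mem_filter]
    exact ⟨hα₀s, by rw [hmaxw, hMwdef, hα₀]⟩
  have hS'ne : (initialForm w0 w g).support.Nonempty := ⟨α₀, hα₀S⟩
  set Mv : ℝ := (initialForm w0 w g).support.sup' hS'ne (wOf v0 v g) with hMvdef
  have hmaxv : maxdegP v0 v (initialForm w0 w g) = Mv := by
    rw [hMvdef]; exact aux_maxdegP_initialForm v0 v hS'ne
  set C : ℝ := g.support.sup' hs (fun α => |wOf v0 v g α|) with hCdef
  have hC0 : (0:ℝ) ≤ C :=
    le_trans (abs_nonneg (wOf v0 v g α₀)) (Finset.le_sup' (fun α => |wOf v0 v g α|) hα₀s)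
  obtain ⟨δ, hδ0, hδle⟩ : ∃ δ : ℝ, 0 < δ ∧
      ∀ α ∈ g.support, wOf w0 w g α ≠ Mw → δ ≤ Mw - wOf w0 w g α := by
    by_cases hSl : (g.support.filter (fun α => wOf w0 w g α < Mw)).Nonempty
    · refine ⟨(g.support.filter (fun α => wOf w0 w g α < Mw)).inf' hSl
        (fun α => Mw - wOf w0 w g α), ?_, ?_⟩
      · obtain ⟨α₁, hα₁, heq⟩ := Finset.exists_mem_eq_inf' hSl (fun α => Mw - wOf w0 w g α)
        rw [heq]
        have := (Finset.mem_filter.mp hα₁).2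
        linarith
      · intro α hα hne
        exact Finset.inf'_le _
          (Finset.mem_filter.mpr ⟨hα, (Finset.le_sup' (wOf w0 w g) hα).lt_of_ne hne⟩)
    · refine ⟨1, one_pos, fun α hα hne => absurd ?_ hSl⟩
      exact ⟨α, Finset.mem_filter.mpr ⟨hα, (Finset.le_sup' (wOf w0 w g) hα).lt_of_ne hne⟩⟩
  refine ⟨min ε₁ (δ / (2*C+1)), lt_min hε₁pos (by positivity), fun ε hε hlt => ?_⟩
  have hltε₁ : ε < ε₁ := lt_of_lt_of_le hlt (min_le_left _ _)
  have hlt2 : ε < δ / (2*C+1) := lt_of_lt_of_le hlt (min_le_right _ _)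
  have hu0 : w0 + ε * v0 < 0 := hε₁ ε hε hltε₁
  refine ⟨hu0, ?_⟩
  have h2εC : 2*ε*C < δ := by
    have h := (lt_div_iff₀ (by positivity : (0:ℝ) < 2*C+1)).mp hlt2
    nlinarith
  have hVC : ∀ α ∈ g.support, |wOf v0 v g α| ≤ C :=
    fun α hα => Finset.le_sup' (fun α => |wOf v0 v g α|) hα
  obtain ⟨αm, hαmS, hαm⟩ := Finset.exists_mem_eq_sup' hS'ne (wOf v0 v g)
  have hαm' : αm ∈ g.support ∧ wOf w0 w g αm = maxdeg w0 w g := by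
    have := hαmS; rw [hsuppq, Finset.mem_filter] at this; exact this
  have hWαm : wOf w0 w g αm = Mw := by rw [hαm'.2, hmaxw]
  have hMvC : -C ≤ Mv := by
    have h1 := hVC αm hαm'.1
    have h2 := neg_abs_le (wOf v0 v g αm)
    rw [hMvdef, hαm]
    linarith
  have hVleMv : ∀ α, α ∈ g.support → wOf w0 w g α = Mw → wOf v0 v g α ≤ Mv := by
    intro α hα hWα
    have hmem : α ∈ (initialForm w0 w g).support := by
      rw [hsuppq, Finset.mem_filter]
      exact ⟨hα, by rw [hWα, hmaxw]⟩
    rw [hMvdef]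
    exact Finset.le_sup' (wOf v0 v g) hmem
  have hkey : ∀ α ∈ g.support, wOf w0 w g α ≠ Mw →
      wOf w0 w g α + ε * wOf v0 v g α < Mw + ε * Mv := by
    intro α hα hne
    have h1 := hδle α hα hne
    have h2 : wOf v0 v g α ≤ C := (abs_le.mp (hVC α hα)).2
    have e1 : ε * wOf v0 v g α ≤ ε * C := mul_le_mul_of_nonneg_left h2 hε.le
    have e2 : ε * (-C) ≤ ε * Mv := mul_le_mul_of_nonneg_left hMvC hε.le
    nlinarith
  have hle : ∀ α ∈ g.support, wOf w0 w g α + ε * wOf v0 v g α ≤ Mw + ε * Mv := by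
    intro α hα
    by_cases hWα : wOf w0 w g α = Mw
    · have h1 := hVleMv α hα hWα
      have h2 : ε * wOf v0 v g α ≤ ε * Mv := mul_le_mul_of_nonneg_left h1 hε.le
      rw [hWα]; linarith
    · exact (hkey α hα hWα).le
  have hmaxu : maxdeg (w0 + ε * v0) (w + ε • v) g = Mw + ε * Mv := by
    rw [aux_maxdeg_eq_sup' hs hu0]
    apply le_antisymm
    · refine Finset.sup'_le _ _ (fun α hα => ?_)
      rw [aux_wOf_add]
      exact hle α hα
    · have h1 : wOf (w0 + ε * v0) (w + ε • v) g αm = Mw + ε * Mv := by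
        rw [aux_wOf_add, hWαm, hMvdef, hαm]
      rw [← h1]
      exact Finset.le_sup' _ hαm'.1
  have hiff : ∀ α ∈ g.support,
      (wOf w0 w g α + ε * wOf v0 v g α = Mw + ε * Mv ↔
        (wOf w0 w g α = Mw ∧ wOf v0 v g α = Mv)) := by
    intro α hα
    constructor
    · intro he
      by_cases hWα : wOf w0 w g α = Mw
      · refine ⟨hWα, ?_⟩
        rw [hWα] at he
        have h1 : ε * wOf v0 v g α = ε * Mv := by linarith
        exact mul_left_cancel₀ (ne_of_gt hε) h1
      · exact absurd he (ne_of_lt (hkey α hα hWα))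
    · rintro ⟨h1, h2⟩; rw [h1, h2]
  -- final equality, coefficient by coefficient
  apply MvPolynomial.ext
  intro α
  rw [aux_coeff_initialForm, aux_coeff_initialFormP]
  by_cases hα : α ∈ g.support
  · by_cases hαq : α ∈ (initialForm w0 w g).support
    · rw [if_pos hαq]
      have hαf : α ∈ g.support ∧ wOf w0 w g α = maxdeg w0 w g := by
        have := hαq; rw [hsuppq, Finset.mem_filter] at this; exact this
      have hWα : wOf w0 w g α = Mw := by rw [hαf.2, hmaxw]
      have hcα : PowerSeries.coeff (R := R) (tord (MvPolynomial.coeff α g))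
          (MvPolynomial.coeff α g) ≠ 0 :=
        aux_coeff_tord_ne_zero (MvPolynomial.mem_support_iff.mp hα)
      have hcoeffq : MvPolynomial.coeff α (initialForm w0 w g) =
          Polynomial.monomial (tord (MvPolynomial.coeff α g))
            (PowerSeries.coeff (R := R) (tord (MvPolynomial.coeff α g)) (MvPolynomial.coeff α g)) := by
        rw [aux_coeff_initialForm, if_pos hαf]
      rw [hcoeffq, Polynomial.support_monomial _ hcα, Finset.sum_singleton,
        Polynomial.coeff_monomial, if_pos rfl, hmaxv, hmaxu]
      by_cases hVα : wOf v0 v g α = Mv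
      · rw [if_pos (show α ∈ g.support ∧
            wOf (w0 + ε * v0) (w + ε • v) g α = Mw + ε * Mv from
            ⟨hα, by rw [aux_wOf_add]; exact (hiff α hα).mpr ⟨hWα, hVα⟩⟩),
          if_pos (show wdeg v0 v (α, tord (MvPolynomial.coeff α g)) = Mv from hVα)]
      · rw [if_neg (show ¬(α ∈ g.support ∧
            wOf (w0 + ε * v0) (w + ε • v) g α = Mw + ε * Mv) from fun h =>
            hVα (((hiff α hα).mp (by rw [← aux_wOf_add]; exact h.2)).2)),
          if_neg (show ¬(wdeg v0 v (α, tord (MvPolynomial.coeff α g)) = Mv) from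
            fun h => hVα h)]
    · rw [if_neg hαq]
      have hWα : wOf w0 w g α ≠ Mw := by
        intro h
        apply hαq
        rw [hsuppq, Finset.mem_filter]
        exact ⟨hα, by rw [h, hmaxw]⟩
      rw [hmaxu, if_neg]
      rintro ⟨-, h2⟩
      rw [aux_wOf_add] at h2
      exact absurd h2 (ne_of_lt (hkey α hα hWα))
  · rw [if_neg (fun h => hα h.1), if_neg]
    intro h
    apply hα
    have := h; rw [hsuppq, Finset.mem_filter] at this
    exact this.1

end
end
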